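/- Let d ≥ 1, W : ℝ → ℝ a continuous path, ℒ the Fourier multiplier of assumption (A1), s ∈ ℝ and ν > 0. There is a constant C such that for every bounded interval I = [a,b), every f ∈ L¹(I;H^s(𝕋^d)), and every u : I → H^s(𝕋^d) satisfying the Duhamel relation u(t) = e^{−(W_t−W_a)ℒ}u(a) + ∫_a^t e^{−(W_t−W_τ)ℒ}f(τ) dτ for all t ∈ I (i.e. u solves ∂_t u + (dW_t/dt)ℒu = f), one has ‖u‖_{F^{s,ν}(I)} ≤ C( ‖u‖_{E^s(I)} + ‖f‖_{N^{s,ν}(I)} ). -/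

import Mathlib

open scoped ENNReal
open MeasureTheory

attribute [local instance] Classical.propDecidable

namespace Modulated

/-- Frequency lattice `ℤ^d`. -/
abbrev Freq (d : ℕ) := Fin d → ℤ

/-- A distribution on `𝕋^d`, encoded by its sequence of Fourier coefficients. -/
abbrev FC (d : ℕ) := Freq d → ℂ

variable {d : ℕ}

/-- Japanese bracket `⟨k⟩ = (1+|k|²)^{1/2}`. -/
noncomputable def jb (k : Freq d) : ℝ := Real.sqrt (1 + ∑ i, ((k i : ℝ)) ^ 2)

/-- Euclidean norm `|k|` of a frequency. -/
noncomputable def freqNorm (k : Freq d) : ℝ := Real.sqrt (∑ i, ((k i : ℝ)) ^ 2)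

/-- The `H^s(𝕋^d)` norm (as an extended real), through Fourier coefficients. -/
noncomputable def HsNorm (s : ℝ) (u : FC d) : ℝ≥0∞ :=
  (∑' k : Freq d, ENNReal.ofReal (jb k ^ (2 * s) * ‖u k‖ ^ 2)) ^ (1/2 : ℝ)

/-- The `L²(𝕋^d)` norm. -/
noncomputable def L2Norm (u : FC d) : ℝ≥0∞ := HsNorm 0 u

/-- Littlewood-Paley projector `P_N`, `N = 2^n`, selecting `N/2 < |k| ≤ N`
(for `n = 0` this selects `1/2 < |k| ≤ 1`, consistently with the convention
`P_{≤ 1/2} u = û₀`). -/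
noncomputable def PN (n : ℕ) (u : FC d) : FC d :=
  fun k => if freqNorm k ≤ (2:ℝ) ^ n ∧ ¬ freqNorm k ≤ (2:ℝ) ^ n / 2 then u k else 0

/-- The propagator `e^{τℒ}`, `ℒ` the Fourier multiplier with symbol `i φ(k)`. -/
noncomputable def expL (φ : (Fin d → ℝ) → ℝ) (τ : ℝ) (u : FC d) : FC d :=
  fun k => Complex.exp (Complex.I * (τ : ℂ) * (φ (fun i => (k i : ℝ)) : ℂ)) * u k

/-- `V^p([a,b)) H^s` norm (with the convention `u(b) := 0`). -/
noncomputable def VpNorm (s p a b : ℝ) (u : ℝ → FC d) : ℝ≥0∞ :=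
  ⨆ (K : ℕ) (t : Fin (K+1) → ℝ) (_ : Monotone t) (_ : t 0 = a) (_ : t (Fin.last K) = b),
    (∑ k : Fin K,
      (HsNorm s fun j =>
        (if t k.succ = b then 0 else u (t k.succ) j) -
          (if t k.castSucc = b then 0 else u (t k.castSucc) j)) ^ p) ^ (1/p)

/-- `U^p([a,b)) H^s` atom. -/
def IsAtom (s p a b : ℝ) (A : ℝ → FC d) : Prop :=
  ∃ (K : ℕ) (t : Fin (K+1) → ℝ) (ψ : Fin K → FC d),
    Monotone t ∧ t 0 = a ∧ t (Fin.last K) = b ∧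
    (∑ k : Fin K, (HsNorm s (ψ k)) ^ p) ≤ 1 ∧
    ∀ x j, A x j = ∑ k : Fin K, if t k.castSucc ≤ x ∧ x < t k.succ then ψ k j else 0

/-- `U^p([a,b)) H^s` (atomic) norm. -/
noncomputable def UpNorm (s p a b : ℝ) (u : ℝ → FC d) : ℝ≥0∞ :=
  ⨅ (c : ℕ → ℂ) (A : ℕ → ℝ → FC d)
    (_ : Summable fun n => ‖c n‖) (_ : ∀ n, IsAtom s p a b (A n))
    (_ : ∀ t ∈ Set.Ico a b, ∀ j, HasSum (fun n => c n * A n t j) (u t j)),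
    ENNReal.ofReal (∑' n, ‖c n‖)

/-- Adapted norm `‖u‖_{U^p_{Wℒ}([a,b)) H^s} = ‖e^{W_t ℒ} u‖_{U^p H^s}`. -/
noncomputable def UpWNorm (s p : ℝ) (φ : (Fin d → ℝ) → ℝ) (W : ℝ → ℝ) (a b : ℝ)
    (u : ℝ → FC d) : ℝ≥0∞ :=
  UpNorm s p a b fun t => expL φ (W t) (u t)

/-- Adapted norm `‖u‖_{V^p_{Wℒ}([a,b)) H^s} = ‖e^{W_t ℒ} u‖_{V^p H^s}`. -/
noncomputable def VpWNorm (s p : ℝ) (φ : (Fin d → ℝ) → ℝ) (W : ℝ → ℝ) (a b : ℝ)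
    (u : ℝ → FC d) : ℝ≥0∞ :=
  VpNorm s p a b fun t => expL φ (W t) (u t)

/-- The solution space norm `‖u‖_{X^s([a,b))}`. -/
noncomputable def XNorm (s : ℝ) (φ : (Fin d → ℝ) → ℝ) (W : ℝ → ℝ) (a b : ℝ)
    (u : ℝ → FC d) : ℝ≥0∞ :=
  (∑' n : ℕ, (2:ℝ≥0∞) ^ (2 * s * (n:ℝ)) *
    (UpWNorm 0 2 φ W a b fun t => PN n (u t)) ^ (2:ℝ)) ^ (1/2:ℝ)

/-- The norm `‖u‖_{Y^s([a,b))}`. -/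
noncomputable def YNorm (s : ℝ) (φ : (Fin d → ℝ) → ℝ) (W : ℝ → ℝ) (a b : ℝ)
    (u : ℝ → FC d) : ℝ≥0∞ :=
  (∑' n : ℕ, (2:ℝ≥0∞) ^ (2 * s * (n:ℝ)) *
    (VpWNorm 0 2 φ W a b fun t => PN n (u t)) ^ (2:ℝ)) ^ (1/2:ℝ)

/-- Short-time norm `‖u‖_{F^{s,ν}([a,b))}`. -/
noncomputable def FNorm (s ν : ℝ) (φ : (Fin d → ℝ) → ℝ) (W : ℝ → ℝ) (a b : ℝ)
    (u : ℝ → FC d) : ℝ≥0∞ :=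
  (∑' n : ℕ, (2:ℝ≥0∞) ^ (2 * s * (n:ℝ)) *
    (⨆ (c : ℝ) (_ : a ≤ c) (_ : c + min (((2:ℝ) ^ n) ^ (-ν)) (b - a) ≤ b),
      UpWNorm 0 2 φ W c (c + min (((2:ℝ) ^ n) ^ (-ν)) (b - a))
        fun t => PN n (u t)) ^ (2:ℝ)) ^ (1/2:ℝ)

/-- Adapted `DU²` norm: the `U²` norm of the modulated primitive of `f`. -/
noncomputable def DUWNorm (φ : (Fin d → ℝ) → ℝ) (W : ℝ → ℝ) (a b : ℝ)
    (f : ℝ → FC d) : ℝ≥0∞ :=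
  UpNorm 0 2 a b fun t j => ∫ τ in a..t, expL φ (W τ) (f τ) j

/-- Short-time norm `‖f‖_{N^{s,ν}([a,b))}`. -/
noncomputable def NNorm (s ν : ℝ) (φ : (Fin d → ℝ) → ℝ) (W : ℝ → ℝ) (a b : ℝ)
    (f : ℝ → FC d) : ℝ≥0∞ :=
  (∑' n : ℕ, (2:ℝ≥0∞) ^ (2 * s * (n:ℝ)) *
    (⨆ (c : ℝ) (_ : a ≤ c) (_ : c + min (((2:ℝ) ^ n) ^ (-ν)) (b - a) ≤ b),
      DUWNorm φ W c (c + min (((2:ℝ) ^ n) ^ (-ν)) (b - a))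
        fun t => PN n (f t)) ^ (2:ℝ)) ^ (1/2:ℝ)

/-- Energy norm `‖u‖_{E^s([a,b))}`. -/
noncomputable def ENorm (s : ℝ) (a b : ℝ) (u : ℝ → FC d) : ℝ≥0∞ :=
  (∑' n : ℕ, (2:ℝ≥0∞) ^ (2 * s * (n:ℝ)) *
    (⨆ t ∈ Set.Ico a b, L2Norm (PN n (u t))) ^ (2:ℝ)) ^ (1/2:ℝ)

/-- `sup_{t ∈ [a,b)} ‖u(t)‖_{H^s}`. -/
noncomputable def SupHs (s a b : ℝ) (u : ℝ → FC d) : ℝ≥0∞ :=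
  ⨆ t ∈ Set.Ico a b, HsNorm s (u t)

/-- Assumption (A0): `W` is continuous, its occupation measures are absolutely
continuous, and it is `(ρ,γ)`-irregular:
`⟨ξ⟩^ρ |∫_s^t e^{-i ξ W_r} dr| ≤ C (t-s)^γ`. -/
def Irregular (ρ γ : ℝ) (W : ℝ → ℝ) : Prop :=
  Continuous W ∧
  (∀ a b : ℝ, (volume.restrict (Set.Ioc a b)).map W ≪ volume) ∧
  ∃ C : ℝ, ∀ ξ s t : ℝ, 0 ≤ s → s ≤ t →
    Real.sqrt (1 + ξ ^ 2) ^ ρ *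
      ‖∫ r in s..t, Complex.exp (-(Complex.I * (ξ:ℂ) * (W r : ℂ)))‖ ≤ C * (t - s) ^ γ

/-- The signs `±_j` take values in `{+1, -1}`. -/
def IsSign {m : ℕ} (ε : Fin (m+1) → ℤ) : Prop := ∀ j, ε j = 1 ∨ ε j = -1

/-- Alternating signs `±_j = (-1)^j`. -/
def Alternating {m : ℕ} (ε : Fin (m+1) → ℤ) : Prop := ∀ j : Fin (m+1), ε j = (-1) ^ (j:ℕ)

/-- The hyperplane `Γ^{m+1} = { Σ_j ±_j k_j = 0 }`. -/
def InGamma {m : ℕ} (ε : Fin (m+1) → ℤ) (kk : Fin (m+1) → Freq d) : Prop :=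
  ∑ j, ε j • kk j = 0

/-- `z^+ = z`, `z^- = conj z`. -/
noncomputable def signedVal (e : ℤ) (z : ℂ) : ℂ := if e = 1 then z else (starRingEnd ℂ) z

/-- The multilinear nonlinearity `N(u_1, …, u_m)` built from the multiplier `Nh`
and the signs `ε` (assumption (A2)). -/
noncomputable def NL {d : ℕ} (m : ℕ) (ε : Fin (m+1) → ℤ)
    (Nh : (Fin (m+1) → Freq d) → ℂ) (u : Fin m → FC d) : FC d :=
  fun k0 => ∑' kk : {kk : Fin (m+1) → Freq d // kk 0 = k0 ∧ InGamma ε kk},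
    Nh kk.1 * ∏ j : Fin m, signedVal (ε j.succ) (u j (kk.1 j.succ))

/-- Assumption (A3)_β: `|N̂(k_0,…,k_m)| ≤ C Π_j ⟨k_j⟩^{β_j}` on `Γ^{m+1}`. -/
def SymbolBound {d : ℕ} (m : ℕ) (ε : Fin (m+1) → ℤ)
    (Nh : (Fin (m+1) → Freq d) → ℂ) (β : Fin (m+1) → ℝ) : Prop :=
  ∃ C : ℝ, ∀ kk : Fin (m+1) → Freq d, InGamma ε kk →
    ‖Nh kk‖ ≤ C * ∏ j, jb (kk j) ^ (β j)

/-- Assumption (A4)_α (strong non-resonance): on the support of `N̂` in `Γ^{m+1}`,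
`|Σ_j ±_j φ(k_j)| ≥ c ⟨k_0^*⟩^{α_1} ⟨k_2^*⟩^{α_2}`, stated through any sorting
permutation realizing the decreasing rearrangement of `(|k_0|, …, |k_m|)`. -/
def StronglyNonResonant {d : ℕ} (m : ℕ) (ε : Fin (m+1) → ℤ)
    (Nh : (Fin (m+1) → Freq d) → ℂ) (φ : (Fin d → ℝ) → ℝ) (α₁ α₂ : ℝ) : Prop :=
  ∃ c : ℝ, 0 < c ∧ ∀ kk : Fin (m+1) → Freq d, InGamma ε kk → Nh kk ≠ 0 →
    ∀ σ : Equiv.Perm (Fin (m+1)), (Antitone fun ℓ => freqNorm (kk (σ ℓ))) →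
      c * jb (kk (σ 0)) ^ α₁ * jb (kk (σ 2)) ^ α₂ ≤
        |∑ j, (ε j : ℝ) * φ (fun i => ((kk j i : ℝ)))|

/-- Completely resonant multiplier: supported on the diagonal, with purely
imaginary values there. -/
def CompletelyResonant {d : ℕ} (m : ℕ) (Rh : (Fin (m+1) → Freq d) → ℂ) : Prop :=
  (∀ kk : Fin (m+1) → Freq d, (¬ ∀ j, kk j = kk 0) → Rh kk = 0) ∧
  (∀ kk : Fin (m+1) → Freq d, (Rh kk).re = 0)

/-- `dstar β ℓ = β_{ℓ+1}^*`: the decreasing rearrangement of `(β_1, …, β_m)`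
(extended by `0` out of range). -/
noncomputable def dstar (m : ℕ) (β : Fin (m+1) → ℝ) : ℕ → ℝ :=
  fun i =>
    if h : i < m then
      (fun j : Fin m => β j.succ) (Tuple.sort (fun j : Fin m => β j.succ) (Fin.rev ⟨i, h⟩))
    else 0

/-- Condition (A_ρ)_{α,β,s} on the irregularity exponent `ρ`. -/
def Arho (d m : ℕ) (α₁ α₂ : ℝ) (β : Fin (m+1) → ℝ) (s ρ : ℝ) : Prop :=
  ρ ≥ (β 0 + dstar m β 0) / α₁ ∧
  ρ ≥ (dstar m β 0 + dstar m β 1 - 2 * s) / α₁ ∧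
  (∀ l₀ L : ℕ, 2 ≤ l₀ → l₀ ≤ m → 2 ≤ L → L ≤ l₀ - 1 →
    ρ > (dstar m β 0 + dstar m β 1 - 2 * s +
      ∑ l ∈ Finset.Icc 2 L, (dstar m β l + (d:ℝ)/2 - s)) / (α₁ + α₂)) ∧
  (∀ l₀ L : ℕ, 2 ≤ l₀ → l₀ ≤ m → l₀ + 1 ≤ L → L ≤ m →
    ρ > (dstar m β 0 + dstar m β 1 + β 0 + (d:ℝ)/2 - s +
      ∑ l ∈ Finset.Icc 2 L, (dstar m β l + (d:ℝ)/2 - s)) / (α₁ + α₂))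

/-- Condition (A_ρ*)_{α,β,β_R,s} on the irregularity exponent `ρ`. -/
def ArhoStar (d m : ℕ) (γ α₁ α₂ : ℝ) (β βR : Fin (m+1) → ℝ) (s ν ρ : ℝ) : Prop :=
  ρ ≥ (β 0 + dstar m β 0 + (∑ j, βR j) + (2 - γ) * ν) / α₁ ∧
  ρ ≥ (dstar m β 0 + dstar m β 1 - 2 * s + (1 - γ) * ν) / α₁ ∧
  (∀ l₀ L : ℕ, 2 ≤ l₀ → l₀ ≤ m → 2 ≤ L → L ≤ l₀ - 1 →
    ρ > (dstar m β 0 + dstar m β 1 - 2 * s +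
      (∑ l ∈ Finset.Icc 2 L, (dstar m β l + (d:ℝ)/2 - s)) + (1 - γ) * ν) / (α₁ + α₂)) ∧
  (∀ l₀ L : ℕ, 2 ≤ l₀ → l₀ ≤ m → l₀ + 1 ≤ L → L ≤ m →
    ρ > (dstar m β 0 + dstar m β 1 + β 0 + (∑ j, βR j) - s +
      (∑ l ∈ Finset.Icc 2 L, (dstar m β l + (d:ℝ)/2 - s)) + (2 - γ) * ν) / (α₁ + α₂))

/-- Mild (Duhamel) solution on `[0,T)` of `∂_t u + Ẇ ℒ u + N(u) = 0`:
`u(t) = e^{-(W_t - W_0)ℒ} u_0 - ∫_0^t e^{-(W_t - W_τ)ℒ} N(u(τ)) dτ`. -/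
def IsMildSolution {d : ℕ} (m : ℕ) (ε : Fin (m+1) → ℤ)
    (Nh : (Fin (m+1) → Freq d) → ℂ) (φ : (Fin d → ℝ) → ℝ) (W : ℝ → ℝ)
    (T : ℝ) (u0 : FC d) (u : ℝ → FC d) : Prop :=
  ∀ t ∈ Set.Ico (0:ℝ) T, ∀ k,
    u t k = expL φ (W 0 - W t) u0 k -
      ∫ τ in (0:ℝ)..t, expL φ (W τ - W t) (NL m ε Nh fun _ => u τ) k

/-- `u ∈ C([0,T); H^s(𝕋^d))`. -/
def ContHs {d : ℕ} (s T : ℝ) (u : ℝ → FC d) : Prop :=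
  (∀ t ∈ Set.Ico (0:ℝ) T, HsNorm s (u t) < ⊤) ∧
  ∀ t ∈ Set.Ico (0:ℝ) T, ∀ δ : ℝ, 0 < δ → ∃ η : ℝ, 0 < η ∧
    ∀ t' ∈ Set.Ico (0:ℝ) T, |t' - t| < η →
      HsNorm s (fun k => u t' k - u t k) < ENNReal.ofReal δ


-- auxiliary lemmas

lemma hsnorm_zero {d : ℕ} (s : ℝ) : HsNorm (d := d) s (fun _ => 0) = 0 := by
  simp [HsNorm, ENNReal.rpow_eq_zero_iff]

lemma isAtom_zero {d : ℕ} (s a b : ℝ) (hab : a ≤ b) :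
    IsAtom (d := d) s 2 a b (fun _ _ => (0:ℂ)) := by
  refine ⟨1, ![a, b], fun _ _ => 0, ?_, ?_, ?_, ?_, ?_⟩
  · intro i j hij
    fin_cases i <;> fin_cases j <;> simp_all [Fin.le_def]
  · simp
  · simp [Fin.last]
  · simp [hsnorm_zero]
  · intro x j; simp

lemma hsnorm_norm_eq {d : ℕ} (s : ℝ) (u v : FC d) (h : ∀ k, ‖u k‖ = ‖v k‖) :
    HsNorm s u = HsNorm s v := by
  unfold HsNorm
  congr 1
  exact tsum_congr fun k => by rw [h k]

lemma hsnorm_expL {d : ℕ} (s : ℝ) (φ : (Fin d → ℝ) → ℝ) (τ : ℝ) (u : FC d) :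
    HsNorm s (expL φ τ u) = HsNorm s u := by
  refine hsnorm_norm_eq s _ _ fun k => ?_
  unfold expL
  rw [norm_mul, Complex.norm_exp]
  have : (Complex.I * (τ : ℂ) * (φ (fun i => (k i : ℝ)) : ℂ)).re = 0 := by
    simp [Complex.mul_re]
  rw [this, Real.exp_zero, one_mul]

lemma upNorm_le_of_decomp {d : ℕ} (s p a b : ℝ) (u : ℝ → FC d)
    (c : ℕ → ℂ) (A : ℕ → ℝ → FC d)
    (hsm : Summable fun n => ‖c n‖) (ha : ∀ n, IsAtom s p a b (A n))
    (hh : ∀ t ∈ Set.Ico a b, ∀ j, HasSum (fun n => c n * A n t j) (u t j)) :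
    UpNorm s p a b u ≤ ENNReal.ofReal (∑' n, ‖c n‖) :=
  iInf_le_of_le c (iInf_le_of_le A (iInf_le_of_le hsm (iInf_le_of_le ha
    (iInf_le_of_le hh le_rfl))))

lemma sqrt_sq (x : ℝ≥0∞) : (x ^ (1/2 : ℝ)) ^ (2:ℝ) = x := by
  rw [← ENNReal.rpow_mul]; norm_num

lemma upNorm_const {d : ℕ} (a b : ℝ) (hab : a < b) (ψ : FC d) (v : ℝ → FC d)
    (hv : ∀ t ∈ Set.Ico a b, ∀ j, v t j = ψ j) :
    UpNorm 0 2 a b v ≤ HsNorm 0 ψ := by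
  by_cases htop : HsNorm 0 ψ = ⊤
  · rw [htop]; exact le_top
  by_cases hzero : HsNorm 0 ψ = 0
  · have hψ : ∀ j, ψ j = 0 := by
      intro j
      have h1 : (∑' k : Freq d, ENNReal.ofReal (jb k ^ (2 * (0:ℝ)) * ‖ψ k‖ ^ 2)) = 0 := by
        have h2 := hzero
        unfold HsNorm at h2
        rw [ENNReal.rpow_eq_zero_iff] at h2
        rcases h2 with ⟨h2, _⟩ | ⟨_, h2⟩
        · exact h2
        · norm_num at h2
      rw [ENNReal.tsum_eq_zero] at h1
      have h3 := h1 j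
      rw [ENNReal.ofReal_eq_zero] at h3
      have h4 : (0:ℝ) ≤ jb j ^ (2 * (0:ℝ)) * ‖ψ j‖ ^ 2 := by
        apply mul_nonneg (Real.rpow_nonneg (Real.sqrt_nonneg _) _) (sq_nonneg _)
      have h5 : jb j ^ (2 * (0:ℝ)) * ‖ψ j‖ ^ 2 = 0 := le_antisymm h3 h4
      have h6 : jb j ^ (2 * (0:ℝ)) = 1 := by norm_num
      rw [h6, one_mul] at h5
      have := pow_eq_zero_iff (n := 2) (by norm_num) |>.mp h5
      exact norm_eq_zero.mp this
    refine le_trans (upNorm_le_of_decomp 0 2 a b v (fun _ => 0) (fun _ _ _ => 0)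
      ?_ ?_ ?_) ?_
    · simpa using summable_zero
    · intro n; exact isAtom_zero 0 a b hab.le
    · intro t ht j
      rw [hv t ht j, hψ j]
      simpa using hasSum_zero
    · simp
  · set r : ℝ := (HsNorm 0 ψ).toReal with hr
    have hrpos : 0 < r := ENNReal.toReal_pos hzero htop
    have hrr : ENNReal.ofReal r = HsNorm 0 ψ := ENNReal.ofReal_toReal htop
    set A0 : ℝ → FC d := fun x k => if a ≤ x ∧ x < b then ψ k / (r:ℂ) else 0 with hA0
    have hatom : IsAtom (d := d) 0 2 a b A0 := by
      refine ⟨1, ![a, b], fun _ k => ψ k / (r:ℂ), ?_, ?_, ?_, ?_, ?_⟩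
      · have hab' := hab.le
        intro i j hij
        fin_cases i <;> fin_cases j <;> simp_all [Fin.le_def]
      · simp
      · simp [Fin.last]
      · rw [Fin.sum_univ_one]
        have hterm : ∀ k : Freq d, ENNReal.ofReal (jb k ^ (2 * (0:ℝ)) * ‖ψ k / (r:ℂ)‖ ^ 2)
            = ENNReal.ofReal ((r^2)⁻¹) * ENNReal.ofReal (jb k ^ (2 * (0:ℝ)) * ‖ψ k‖ ^ 2) := by
          intro k
          rw [← ENNReal.ofReal_mul (by positivity)]
          congr 1
          rw [norm_div, div_pow]
          have : ‖(r:ℂ)‖ = r := by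
            rw [Complex.norm_real, Real.norm_eq_abs, abs_of_pos hrpos]
          rw [this]
          field_simp
        have hsq : HsNorm 0 (fun k => ψ k / (r:ℂ)) ^ (2:ℝ)
            = ENNReal.ofReal ((r^2)⁻¹) * (HsNorm 0 ψ) ^ (2:ℝ) := by
          unfold HsNorm
          rw [sqrt_sq, sqrt_sq]
          rw [← ENNReal.tsum_mul_left]
          exact tsum_congr hterm
        have h9 : (HsNorm 0 ψ) ^ (2:ℝ) = ENNReal.ofReal (r^2) := by
          rw [← hrr, ENNReal.ofReal_rpow_of_pos hrpos]
          congr 1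
          rw [← Real.rpow_natCast r 2]
          norm_num
        rw [hsq, h9, ← ENNReal.ofReal_mul (by positivity), inv_mul_cancel₀ (by positivity)]
        simp
      · intro x k
        simp only [hA0, Fin.sum_univ_one]
        congr 1
    refine le_trans (upNorm_le_of_decomp 0 2 a b v
      (fun n => if n = 0 then (r:ℂ) else 0)
      (fun n => if n = 0 then A0 else fun _ _ => 0) ?_ ?_ ?_) ?_
    · apply summable_of_ne_finset_zero (s := {0})
      intro n hn
      simp only [Finset.mem_singleton] at hn
      simp [hn]
    · intro n
      by_cases hn : n = 0
      · simpa [hn] using hatom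
      · simpa [hn] using isAtom_zero 0 a b hab.le
    · intro t ht j
      have heq : (fun n : ℕ => (if n = 0 then (r:ℂ) else 0) *
          (if n = 0 then A0 else fun _ _ => 0) t j)
          = fun n : ℕ => if n = 0 then ψ j else 0 := by
        funext n
        by_cases hn : n = 0
        · subst hn
          have hr0 : (r:ℂ) ≠ 0 := by exact_mod_cast hrpos.ne'
          simp [hA0, ht.1, ht.2, mul_div_cancel₀, hr0]
        · simp [hn]
      rw [hv t ht j, heq]
      exact hasSum_ite_eq 0 (ψ j)
    · have : (∑' n, ‖if n = 0 then (r:ℂ) else 0‖) = r := by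
        rw [tsum_eq_single 0 (fun n hn => by simp [hn])]
        simp [Complex.norm_real, abs_of_pos hrpos]
      rw [this, hrr]

lemma upNorm_add_le {d : ℕ} (s p a b : ℝ) (u v w : ℝ → FC d)
    (h : ∀ t ∈ Set.Ico a b, ∀ j, w t j = u t j + v t j) :
    UpNorm s p a b w ≤ UpNorm s p a b u + UpNorm s p a b v := by
  conv_rhs => rw [UpNorm, UpNorm]
  simp only [ENNReal.iInf_add, ENNReal.add_iInf]
  refine le_iInf fun c1 => le_iInf fun A1 => le_iInf fun hs1 => le_iInf fun ha1 =>
    le_iInf fun hh1 => le_iInf fun c2 => le_iInf fun A2 => le_iInf fun hs2 =>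
    le_iInf fun ha2 => le_iInf fun hh2 => ?_
  set cc : ℕ → ℂ := fun n => if Even n then c1 (n/2) else c2 (n/2) with hcc
  set AA : ℕ → ℝ → FC d := fun n => if Even n then A1 (n/2) else A2 (n/2) with hAA
  have hcce : ∀ k : ℕ, cc (2*k) = c1 k := by
    intro k
    simp [hcc, even_two_mul, Nat.mul_div_cancel_left k (by norm_num : 0 < 2)]
  have hcco : ∀ k : ℕ, cc (2*k+1) = c2 k := by
    intro k
    have h1 : ¬ Even (2*k+1) := by simp [Nat.even_add_one, even_two_mul]
    have h2 : (2*k+1)/2 = k := by omega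
    simp [hcc, h1, h2]
  have hAAe : ∀ k : ℕ, AA (2*k) = A1 k := by
    intro k
    simp [hAA, even_two_mul, Nat.mul_div_cancel_left k (by norm_num : 0 < 2)]
  have hAAo : ∀ k : ℕ, AA (2*k+1) = A2 k := by
    intro k
    have h1 : ¬ Even (2*k+1) := by simp [Nat.even_add_one, even_two_mul]
    have h2 : (2*k+1)/2 = k := by omega
    simp [hAA, h1, h2]
  have hsum : HasSum (fun n => ‖cc n‖) ((∑' n, ‖c1 n‖) + ∑' n, ‖c2 n‖) := by
    refine HasSum.even_add_odd ?_ ?_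
    · have : (fun k => ‖cc (2*k)‖) = fun k => ‖c1 k‖ := funext fun k => by rw [hcce]
      rw [this]; exact hs1.hasSum
    · have : (fun k => ‖cc (2*k+1)‖) = fun k => ‖c2 k‖ := funext fun k => by rw [hcco]
      rw [this]; exact hs2.hasSum
  refine le_trans (upNorm_le_of_decomp s p a b w cc AA hsum.summable ?_ ?_) ?_
  · intro n
    by_cases hn : Even n
    · simpa [hAA, hn] using ha1 (n/2)
    · simpa [hAA, hn] using ha2 (n/2)
  · intro t ht j
    rw [h t ht j, add_comm (u t j) (v t j)]
    refine HasSum.even_add_odd ?_ ?_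
    · have : (fun k => cc (2*k) * AA (2*k) t j) = fun k => c1 k * A1 k t j :=
        funext fun k => by rw [hcce, hAAe]
      rw [this]; exact hh1 t ht j
    · have : (fun k => cc (2*k+1) * AA (2*k+1) t j) = fun k => c2 k * A2 k t j :=
        funext fun k => by rw [hcco, hAAo]
      rw [this]; exact hh2 t ht j
  · rw [hsum.tsum_eq, ENNReal.ofReal_add (tsum_nonneg fun _ => norm_nonneg _)
      (tsum_nonneg fun _ => norm_nonneg _), add_comm]

lemma integrand_integrable {d : ℕ} (W : ℝ → ℝ) (hW : Continuous W)
    (pj : ℝ) (a b x y : ℝ) (g : ℝ → ℂ)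
    (hg : IntervalIntegrable g volume a b)
    (hx : x ∈ Set.uIcc a b) (hy : y ∈ Set.uIcc a b) :
    IntervalIntegrable
      (fun τ => Complex.exp (Complex.I * (W τ : ℂ) * (pj : ℂ)) * g τ) volume x y := by
  have hsub : IntervalIntegrable g volume x y := hg.mono_set (Set.uIcc_subset_uIcc hx hy)
  have hcont : Continuous fun τ : ℝ => Complex.exp (Complex.I * (W τ : ℂ) * (pj : ℂ)) :=
    Complex.continuous_exp.comp
      ((continuous_const.mul (Complex.continuous_ofReal.comp hW)).mul continuous_const)
  exact hsub.continuousOn_mul hcont.continuousOn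

lemma modulated_duhamel {d : ℕ} (W : ℝ → ℝ) (hW : Continuous W)
    (φ : (Fin d → ℝ) → ℝ) (a b : ℝ) (hab : a < b)
    (f u : ℝ → FC d)
    (hf : ∀ k, IntervalIntegrable (fun t => f t k) volume a b)
    (hu : ∀ t ∈ Set.Ico a b, ∀ k,
      u t k = expL φ (W a - W t) (u a) k + ∫ τ in a..t, expL φ (W τ - W t) (f τ) k) :
    ∀ t ∈ Set.Ico a b, ∀ j,
      expL φ (W t) (u t) j = expL φ (W a) (u a) j +
        ∫ τ in a..t, expL φ (W τ) (f τ) j := by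
  intro t ht j
  set pj : ℝ := φ (fun i => ((j i : ℝ))) with hpj
  have key := hu t ht j
  show Complex.exp (Complex.I * (W t : ℂ) * (pj:ℂ)) * u t j = _
  rw [key]
  unfold expL
  rw [mul_add]
  congr 1
  · rw [← mul_assoc, ← Complex.exp_add]
    congr 2
    push_cast
    ring
  · rw [← intervalIntegral.integral_const_mul]
    refine intervalIntegral.integral_congr fun τ _ => ?_
    rw [← mul_assoc, ← Complex.exp_add]
    congr 2
    push_cast
    ring

lemma pn_duhamel {d : ℕ} (W : ℝ → ℝ) (hW : Continuous W)
    (φ : (Fin d → ℝ) → ℝ) (a b : ℝ) (hab : a < b)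
    (f u : ℝ → FC d)
    (hf : ∀ k, IntervalIntegrable (fun t => f t k) volume a b)
    (hu : ∀ t ∈ Set.Ico a b, ∀ k,
      u t k = expL φ (W a - W t) (u a) k + ∫ τ in a..t, expL φ (W τ - W t) (f τ) k)
    (n : ℕ) (c c' : ℝ) (hc : a ≤ c) (hc' : c' ≤ b) :
    ∀ t ∈ Set.Ico c c', ∀ j,
      expL φ (W t) (PN n (u t)) j = expL φ (W c) (PN n (u c)) j +
        ∫ τ in c..t, expL φ (W τ) (PN n (f τ)) j := by
  intro t ht j
  have htb : t < b := lt_of_lt_of_le ht.2 hc'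
  have htab : t ∈ Set.Ico a b := ⟨hc.trans ht.1, htb⟩
  have hcab : c ∈ Set.Ico a b := ⟨hc, lt_of_le_of_lt ht.1 htb⟩
  have md := modulated_duhamel W hW φ a b hab f u hf hu
  by_cases hcond : freqNorm j ≤ (2:ℝ) ^ n ∧ ¬ freqNorm j ≤ (2:ℝ) ^ n / 2
  · simp only [expL, PN, if_pos hcond]
    have e1 := md t htab j
    have e2 := md c hcab j
    simp only [expL] at e1 e2
    rw [e1, e2, add_assoc]
    congr 1
    have h1 : IntervalIntegrable
        (fun τ => Complex.exp (Complex.I * (W τ : ℂ) * ((φ fun i => ((j i : ℝ))) : ℂ)) * f τ j)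
        volume a c :=
      integrand_integrable (d := d) W hW _ a b a c _ (hf j) Set.left_mem_uIcc
        (by rw [Set.uIcc_of_le hab.le]; exact ⟨hc, hcab.2.le⟩)
    have h2 : IntervalIntegrable
        (fun τ => Complex.exp (Complex.I * (W τ : ℂ) * ((φ fun i => ((j i : ℝ))) : ℂ)) * f τ j)
        volume c t :=
      integrand_integrable (d := d) W hW _ a b c t _ (hf j)
        (by rw [Set.uIcc_of_le hab.le]; exact ⟨hc, hcab.2.le⟩)
        (by rw [Set.uIcc_of_le hab.le]; exact ⟨htab.1, htb.le⟩)
    exact (intervalIntegral.integral_add_adjacent_intervals h1 h2).symm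
  · simp only [expL, PN, if_neg hcond]
    simp

lemma sub_bound {d : ℕ} (W : ℝ → ℝ) (hW : Continuous W)
    (φ : (Fin d → ℝ) → ℝ) (a b : ℝ) (hab : a < b)
    (f u : ℝ → FC d)
    (hf : ∀ k, IntervalIntegrable (fun t => f t k) volume a b)
    (hu : ∀ t ∈ Set.Ico a b, ∀ k,
      u t k = expL φ (W a - W t) (u a) k + ∫ τ in a..t, expL φ (W τ - W t) (f τ) k)
    (n : ℕ) (c c' : ℝ) (hc : a ≤ c) (hcc : c < c') (hc' : c' ≤ b) :
    UpWNorm 0 2 φ W c c' (fun t => PN n (u t)) ≤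
      (⨆ t ∈ Set.Ico a b, L2Norm (PN n (u t))) +
        DUWNorm φ W c c' (fun t => PN n (f t)) := by
  have key := pn_duhamel W hW φ a b hab f u hf hu n c c' hc hc'
  have tri := upNorm_add_le 0 2 c c'
    (fun _ => expL φ (W c) (PN n (u c)))
    (fun t j => ∫ τ in c..t, expL φ (W τ) (PN n (f τ)) j)
    (fun t => expL φ (W t) (PN n (u t))) key
  refine le_trans tri (add_le_add ?_ le_rfl)
  have h1 := upNorm_const c c' hcc (expL φ (W c) (PN n (u c)))
    (fun _ => expL φ (W c) (PN n (u c))) (fun _ _ _ => rfl)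
  refine h1.trans ?_
  rw [hsnorm_expL]
  exact le_iSup_of_le c (le_iSup_of_le ⟨hc, lt_of_lt_of_le hcc hc'⟩ le_rfl)

lemma sq_sqrt' (x : ℝ≥0∞) : (x ^ (2:ℝ)) ^ (1/2 : ℝ) = x := by
  rw [← ENNReal.rpow_mul]; norm_num

lemma two_rpow_two : ((2:ℝ≥0∞)) ^ (2:ℝ) = 4 := by
  rw [show ((2:ℝ)) = ((2:ℕ):ℝ) by norm_num, ENNReal.rpow_natCast]; norm_num

lemma sq_add_le (x y : ℝ≥0∞) : (x + y) ^ (2:ℝ) ≤ 4 * x ^ (2:ℝ) + 4 * y ^ (2:ℝ) := by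
  rcases le_total x y with hxy | hxy
  · have h1 : x + y ≤ 2 * y := by
      rw [two_mul]; exact add_le_add_left hxy y
    calc (x + y) ^ (2:ℝ) ≤ (2 * y) ^ (2:ℝ) := ENNReal.rpow_le_rpow h1 (by norm_num)
      _ = 4 * y ^ (2:ℝ) := by
        rw [ENNReal.mul_rpow_of_nonneg _ _ (by norm_num : (0:ℝ) ≤ 2), two_rpow_two]
      _ ≤ 4 * x ^ (2:ℝ) + 4 * y ^ (2:ℝ) := le_add_of_nonneg_left zero_le
  · have h1 : x + y ≤ 2 * x := by
      rw [two_mul]; exact add_le_add_right hxy x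
    calc (x + y) ^ (2:ℝ) ≤ (2 * x) ^ (2:ℝ) := ENNReal.rpow_le_rpow h1 (by norm_num)
      _ = 4 * x ^ (2:ℝ) := by
        rw [ENNReal.mul_rpow_of_nonneg _ _ (by norm_num : (0:ℝ) ≤ 2), two_rpow_two]
      _ ≤ 4 * x ^ (2:ℝ) + 4 * y ^ (2:ℝ) := le_add_of_nonneg_right zero_le

/-- **Linear short-time estimate:** if `u` solves `∂_t u + Ẇ ℒ u = f` (in the
Duhamel sense) on a bounded interval `I = [a,b)`, then
`‖u‖_{F^{s,ν}(I)} ≤ C (‖u‖_{E^s(I)} + ‖f‖_{N^{s,ν}(I)})`. -/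
theorem linear_shorttime_estimate
    (d : ℕ) (hd : 1 ≤ d)
    (W : ℝ → ℝ) (hW : Continuous W)
    (φ : (Fin d → ℝ) → ℝ) (hφ : Continuous φ)
    (s ν : ℝ) (hν : 0 < ν) :
    ∃ C : ℝ, 0 ≤ C ∧ ∀ a b : ℝ, a < b → ∀ f u : ℝ → FC d,
      (∀ k, IntervalIntegrable (fun t => f t k) volume a b) →
      (∀ t ∈ Set.Ico a b, ∀ k,
        u t k = expL φ (W a - W t) (u a) k +
          ∫ τ in a..t, expL φ (W τ - W t) (f τ) k) →
      FNorm s ν φ W a b u ≤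
        ENNReal.ofReal C * (ENorm s a b u + NNorm s ν φ W a b f) := by
  refine ⟨3, by norm_num, ?_⟩
  intro a b hab f u hf hu
  have hterm : ∀ n : ℕ,
      (⨆ (c : ℝ) (_ : a ≤ c) (_ : c + min (((2:ℝ) ^ n) ^ (-ν)) (b - a) ≤ b),
        UpWNorm 0 2 φ W c (c + min (((2:ℝ) ^ n) ^ (-ν)) (b - a)) fun t => PN n (u t))
      ≤ (⨆ t ∈ Set.Ico a b, L2Norm (PN n (u t))) +
        (⨆ (c : ℝ) (_ : a ≤ c) (_ : c + min (((2:ℝ) ^ n) ^ (-ν)) (b - a) ≤ b),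
          DUWNorm φ W c (c + min (((2:ℝ) ^ n) ^ (-ν)) (b - a)) fun t => PN n (f t)) := by
    intro n
    have hδpos : 0 < min (((2:ℝ) ^ n) ^ (-ν)) (b - a) :=
      lt_min (Real.rpow_pos_of_pos (by positivity) _) (by linarith)
    refine iSup_le fun c => iSup_le fun hc => iSup_le fun hcb => ?_
    have hbound := sub_bound W hW φ a b hab f u hf hu n c
      (c + min (((2:ℝ) ^ n) ^ (-ν)) (b - a)) hc (by linarith) hcb
    refine hbound.trans (add_le_add_right ?_ _)
    exact le_iSup_of_le c (le_iSup_of_le hc (le_iSup_of_le hcb le_rfl))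
  set E := ENorm s a b u with hE
  set Nn := NNorm s ν φ W a b f with hNn
  have hEsq : (∑' n : ℕ, (2:ℝ≥0∞) ^ (2 * s * (n:ℝ)) *
      (⨆ t ∈ Set.Ico a b, L2Norm (PN n (u t))) ^ (2:ℝ)) = E ^ (2:ℝ) := by
    rw [hE]; unfold ENorm; rw [sqrt_sq]
  have hNsq : (∑' n : ℕ, (2:ℝ≥0∞) ^ (2 * s * (n:ℝ)) *
      (⨆ (c : ℝ) (_ : a ≤ c) (_ : c + min (((2:ℝ) ^ n) ^ (-ν)) (b - a) ≤ b),
        DUWNorm φ W c (c + min (((2:ℝ) ^ n) ^ (-ν)) (b - a)) fun t => PN n (f t)) ^ (2:ℝ))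
      = Nn ^ (2:ℝ) := by
    rw [hNn]; unfold NNorm; rw [sqrt_sq]
  calc FNorm s ν φ W a b u
      ≤ (∑' n : ℕ, ((4:ℝ≥0∞) * ((2:ℝ≥0∞) ^ (2 * s * (n:ℝ)) *
          (⨆ t ∈ Set.Ico a b, L2Norm (PN n (u t))) ^ (2:ℝ)) +
        4 * ((2:ℝ≥0∞) ^ (2 * s * (n:ℝ)) *
          (⨆ (c : ℝ) (_ : a ≤ c) (_ : c + min (((2:ℝ) ^ n) ^ (-ν)) (b - a) ≤ b),
            DUWNorm φ W c (c + min (((2:ℝ) ^ n) ^ (-ν)) (b - a)) fun t => PN n (f t))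
              ^ (2:ℝ)))) ^ (1/2:ℝ) := by
        unfold FNorm
        refine ENNReal.rpow_le_rpow (ENNReal.tsum_le_tsum fun n => ?_) (by norm_num)
        calc (2:ℝ≥0∞) ^ (2 * s * (n:ℝ)) *
            (⨆ (c : ℝ) (_ : a ≤ c) (_ : c + min (((2:ℝ) ^ n) ^ (-ν)) (b - a) ≤ b),
              UpWNorm 0 2 φ W c (c + min (((2:ℝ) ^ n) ^ (-ν)) (b - a))
                fun t => PN n (u t)) ^ (2:ℝ)
            ≤ (2:ℝ≥0∞) ^ (2 * s * (n:ℝ)) *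
              (((⨆ t ∈ Set.Ico a b, L2Norm (PN n (u t))) +
                (⨆ (c : ℝ) (_ : a ≤ c) (_ : c + min (((2:ℝ) ^ n) ^ (-ν)) (b - a) ≤ b),
                  DUWNorm φ W c (c + min (((2:ℝ) ^ n) ^ (-ν)) (b - a))
                    fun t => PN n (f t))) ^ (2:ℝ)) :=
              mul_le_mul_right (ENNReal.rpow_le_rpow (hterm n) (by norm_num)) _
          _ ≤ _ := by
              refine le_trans (mul_le_mul_right (sq_add_le
                (⨆ t ∈ Set.Ico a b, L2Norm (PN n (u t)))
                (⨆ (c : ℝ) (_ : a ≤ c) (_ : c + min (((2:ℝ) ^ n) ^ (-ν)) (b - a) ≤ b),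
                  DUWNorm φ W c (c + min (((2:ℝ) ^ n) ^ (-ν)) (b - a)) fun t => PN n (f t)))
                ((2:ℝ≥0∞) ^ (2 * s * (n:ℝ)))) (le_of_eq ?_)
              ring
    _ = ((4:ℝ≥0∞) * E ^ (2:ℝ) + 4 * Nn ^ (2:ℝ)) ^ (1/2:ℝ) := by
        rw [ENNReal.tsum_add, ENNReal.tsum_mul_left, ENNReal.tsum_mul_left, hEsq, hNsq]
    _ ≤ ((9:ℝ≥0∞) * (E + Nn) ^ (2:ℝ)) ^ (1/2:ℝ) := by
        refine ENNReal.rpow_le_rpow ?_ (by norm_num)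
        have h1 : (4:ℝ≥0∞) * E ^ (2:ℝ) ≤ 4 * (E + Nn) ^ (2:ℝ) :=
          mul_le_mul_right (ENNReal.rpow_le_rpow le_self_add (by norm_num)) _
        have h2 : (4:ℝ≥0∞) * Nn ^ (2:ℝ) ≤ 4 * (E + Nn) ^ (2:ℝ) :=
          mul_le_mul_right (ENNReal.rpow_le_rpow le_add_self (by norm_num)) _
        calc (4:ℝ≥0∞) * E ^ (2:ℝ) + 4 * Nn ^ (2:ℝ)
            ≤ 4 * (E + Nn) ^ (2:ℝ) + 4 * (E + Nn) ^ (2:ℝ) := add_le_add h1 h2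
          _ = 8 * (E + Nn) ^ (2:ℝ) := by rw [← add_mul]; norm_num
          _ ≤ 9 * (E + Nn) ^ (2:ℝ) := mul_le_mul_left (by norm_num) _
    _ = ENNReal.ofReal 3 * (E + Nn) := by
        rw [ENNReal.mul_rpow_of_nonneg _ _ (by norm_num : (0:ℝ) ≤ 1/2), sq_sqrt']
        congr 1
        rw [show (9:ℝ≥0∞) = (3:ℝ≥0∞) ^ (2:ℝ) by
          rw [show ((2:ℝ)) = ((2:ℕ):ℝ) by norm_num, ENNReal.rpow_natCast]; norm_num]
        rw [sq_sqrt']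
        simp

end Modulated
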